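/- Let (T, φ) be a quasi-Sturmian coloring, n ≥ N₀ + 1. In the notation of the induction algorithm, suppose S_n ≠ C_n and A_{n+1}, B_{n+1} are the two (n+1)-extensions of S_n chosen so that A_{n+1} contains more n-balls of class A_n than B_{n+1} does. Then A_{n+1} and B_{n+1} cannot contain the same number of n-balls of class A_n; hence this choice of the sequences (A_n), (B_n) with A_{n+1}, B_{n+1} strongly adjacent to A_n, B_n respectively is unique. -/

import Mathlib

open SimpleGraph

variable {V A : Type*}

/-- Equivalence of colored `n`-balls: a color-preserving isometry between the balls
of radius `n` centered at `u` and `v`, sending `u` to `v`. -/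
def BallEquiv (G : SimpleGraph V) (φ : V → A) (n : ℕ) (u v : V) : Prop :=
  ∃ f : V → V, f u = v ∧
    (∀ x y : V, G.dist u x ≤ n → G.dist u y ≤ n → G.dist (f x) (f y) = G.dist x y) ∧
    (∀ x : V, G.dist u x ≤ n → φ (f x) = φ x) ∧
    (∀ z : V, G.dist v z ≤ n → ∃ x : V, G.dist u x ≤ n ∧ f x = z)

/-- The factor complexity `b(n)`: the number of classes of colored `n`-balls. -/
noncomputable def complexity (G : SimpleGraph V) (φ : V → A) (n : ℕ) : ℕ :=
  Nat.card (Quot (BallEquiv G φ n))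

/-- The colored `n`-ball at `u` is special: it admits two inequivalent `(n+1)`-extensions. -/
def IsSpecialCenter (G : SimpleGraph V) (φ : V → A) (n : ℕ) (u : V) : Prop :=
  ∃ v, BallEquiv G φ n u v ∧ ¬ BallEquiv G φ (n+1) u v

/-- The type set `Λ_u` of a vertex. -/
def typeSet (G : SimpleGraph V) (φ : V → A) (u : V) : Set ℕ :=
  {n | IsSpecialCenter G φ n u}

/-- Two vertices are in the same class: their colored `n`-balls agree for all `n`. -/
def SameClass (G : SimpleGraph V) (φ : V → A) (u v : V) : Prop :=
  ∀ n, BallEquiv G φ n u v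

/-- `m` is the maximal type of `u`. -/
def MaxType (G : SimpleGraph V) (φ : V → A) (u : V) (m : ℕ) : Prop :=
  m ∈ typeSet G φ u ∧ ∀ k ∈ typeSet G φ u, k ≤ m

/-- Weak adjacency of classes of colored `n`-balls (given by representatives `x`, `y`). -/
def WeakAdj (G : SimpleGraph V) (φ : V → A) (n : ℕ) (x y : V) : Prop :=
  ∃ v w, G.Adj v w ∧ BallEquiv G φ n x v ∧ BallEquiv G φ n y w

/-- Strong adjacency: every ball of the class of `x` has a neighboring ball of the class of `y`. -/
def StrongAdj (G : SimpleGraph V) (φ : V → A) (n : ℕ) (x y : V) : Prop :=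
  ∀ v, BallEquiv G φ n x v → ∃ w, G.Adj v w ∧ BallEquiv G φ n y w

/-- The factor graph `𝒢ₙ` on classes of colored `n`-balls. -/
def FactorGraph (G : SimpleGraph V) (φ : V → A) (n : ℕ) :
    SimpleGraph (Quot (BallEquiv G φ n)) where
  Adj a b := a ≠ b ∧ ∃ u v, G.Adj u v ∧ Quot.mk _ u = a ∧ Quot.mk _ v = b
  symm := ⟨by rintro a b ⟨hne, u, v, h, hu, hv⟩; exact ⟨hne.symm, v, u, h.symm, hv, hu⟩⟩
  loopless := ⟨by rintro a ⟨hne, _⟩; exact hne rfl⟩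

/-- The quotient graph `X = Γ\T` on classes of vertices. -/
def QuotGraph (G : SimpleGraph V) (φ : V → A) :
    SimpleGraph (Quot (SameClass G φ)) where
  Adj a b := a ≠ b ∧ ∃ u v, G.Adj u v ∧ Quot.mk _ u = a ∧ Quot.mk _ v = b
  symm := ⟨by rintro a b ⟨hne, u, v, h, hu, hv⟩; exact ⟨hne.symm, v, u, h.symm, hv, hu⟩⟩
  loopless := ⟨by rintro a ⟨hne, _⟩; exact hne rfl⟩


section Auxiliary

/-- If `f : α → β` is surjective and `|α| = |β| + 1`, then (1) no fiber has 3 elements,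
and (2) any two 2-element fibers coincide. -/
lemma fiber_count_lemma {α β : Type*} [Finite α] (f : α → β) (hsurj : Function.Surjective f)
    (hcard : Nat.card α = Nat.card β + 1) :
    (∀ a b c : α, f a = f b → f b = f c → a ≠ b → a ≠ c → b ≠ c → False) ∧
    (∀ a b a' b' : α, f a = f b → a ≠ b → f a' = f b' → a' ≠ b' → f a = f a') := by
  classical
  have : Finite β := Finite.of_surjective f hsurj
  cases nonempty_fintype α
  cases nonempty_fintype β
  rw [Nat.card_eq_fintype_card, Nat.card_eq_fintype_card] at hcard
  set c : β → ℕ := fun v => (Finset.univ.filter (fun x => f x = v)).card with hc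
  have hsum : ∑ v : β, c v = Fintype.card α :=
    (Finset.card_eq_sum_card_fiberwise (fun x _ => Finset.mem_univ (f x))).symm
  have hone : ∀ v : β, 1 ≤ c v := by
    intro v
    obtain ⟨x, hx⟩ := hsurj v
    have : x ∈ Finset.univ.filter (fun x => f x = v) := by simp [hx]
    exact Finset.card_pos.mpr ⟨x, this⟩
  have key : ∀ S : Finset β, Fintype.card β + 1 ≥ Fintype.card β - S.card + ∑ v ∈ S, c v := by
    intro S
    have hsub : S ⊆ Finset.univ := Finset.subset_univ S
    have hsplit : ∑ v ∈ Finset.univ \ S, c v + ∑ v ∈ S, c v = ∑ v : β, c v :=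
      Finset.sum_sdiff hsub
    have hlow : (Finset.univ \ S).card • 1 ≤ ∑ v ∈ Finset.univ \ S, c v :=
      Finset.card_nsmul_le_sum _ _ _ (fun v _ => hone v)
    have hcards : (Finset.univ \ S).card = Fintype.card β - S.card := by
      rw [Finset.card_sdiff_of_subset hsub, Finset.card_univ]
    rw [hcards, smul_eq_mul, mul_one] at hlow
    omega
  constructor
  · intro a b c' hab hbc hnab hnac hnbc
    have hsubset : ({a, b, c'} : Finset α) ⊆ Finset.univ.filter (fun x => f x = f a) := by
      intro x hx
      simp only [Finset.mem_insert, Finset.mem_singleton] at hx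
      rcases hx with rfl | rfl | rfl <;> simp [hab, hbc, hab.trans hbc]
    have h3 : ({a, b, c'} : Finset α).card = 3 := by
      rw [Finset.card_insert_of_notMem (by simp [hnab, hnac]),
        Finset.card_insert_of_notMem (by simp [hnbc]), Finset.card_singleton]
    have hge : 3 ≤ c (f a) := h3 ▸ Finset.card_le_card hsubset
    have hS := key {f a}
    rw [Finset.sum_singleton, Finset.card_singleton] at hS
    have hβ : 1 ≤ Fintype.card β := Fintype.card_pos_iff.mpr ⟨f a⟩
    omega
  · intro a b a' b' hab hnab hab' hnab' 
    by_contra hne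
    have h2 : 2 ≤ c (f a) := by
      have hsubset : ({a, b} : Finset α) ⊆ Finset.univ.filter (fun x => f x = f a) := by
        intro x hx
        simp only [Finset.mem_insert, Finset.mem_singleton] at hx
        rcases hx with rfl | rfl <;> simp [hab]
      have : ({a, b} : Finset α).card = 2 := Finset.card_pair hnab
      exact this ▸ Finset.card_le_card hsubset
    have h2' : 2 ≤ c (f a') := by
      have hsubset : ({a', b'} : Finset α) ⊆ Finset.univ.filter (fun x => f x = f a') := by
        intro x hx
        simp only [Finset.mem_insert, Finset.mem_singleton] at hx
        rcases hx with rfl | rfl <;> simp [hab']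
      have : ({a', b'} : Finset α).card = 2 := Finset.card_pair hnab'
      exact this ▸ Finset.card_le_card hsubset
    have hS := key {f a, f a'}
    rw [Finset.sum_pair hne, Finset.card_pair hne] at hS
    have hβ : 2 ≤ Fintype.card β := by
      have : ({f a, f a'} : Finset β).card = 2 := Finset.card_pair hne
      calc 2 = ({f a, f a'} : Finset β).card := this.symm
        _ ≤ Fintype.card β := Finset.card_le_univ _
    omega


variable {G : SimpleGraph V} {φ : V → A}

private lemma dcomm (G : SimpleGraph V) (u v : V) : G.dist u v = G.dist v u :=
  SimpleGraph.dist_comm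

section Tree
variable (htree : G.IsTree)
include htree

lemma tree_path_length {u v : V} {p : G.Walk u v} (hp : p.IsPath) :
    p.length = G.dist u v := by
  obtain ⟨q, hq, hql⟩ := (htree.isConnected u v).exists_path_of_dist
  rw [(htree.existsUnique_path u v).unique hp hq, hql]

/-- dichotomy for distances across an edge in a tree -/
lemma tree_dist_dichotomy {a w : V} (h : G.Adj a w) (x : V) :
    G.dist a x = G.dist w x + 1 ∨ G.dist w x = G.dist a x + 1 := by
  classical
  obtain ⟨p, hp, hpl⟩ := (htree.isConnected w x).exists_path_of_dist
  by_cases ha : a ∈ p.support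
  · right
    have hsplit := p.take_spec ha
    have h1 : (p.takeUntil a ha).length = G.dist w a :=
      tree_path_length htree (hp.takeUntil ha)
    have h2 : (p.dropUntil a ha).length = G.dist a x :=
      tree_path_length htree (hp.dropUntil ha)
    have h3 : G.dist w a = 1 := dist_eq_one_iff_adj.mpr h.symm
    have := congrArg SimpleGraph.Walk.length hsplit
    rw [SimpleGraph.Walk.length_append, h1, h2, h3, hpl] at this
    omega
  · left
    have : (p.cons h).IsPath := hp.cons ha
    have hl := tree_path_length htree this
    rw [SimpleGraph.Walk.length_cons, hpl] at hl
    omega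

lemma tree_exists_toward {a x : V} (hne : x ≠ a) :
    ∃ w, G.Adj a w ∧ G.dist a x = G.dist w x + 1 := by
  obtain ⟨p, hp, hpl⟩ := (htree.isConnected a x).exists_path_of_dist
  cases p with
  | nil => exact absurd rfl hne.symm
  | cons h q =>
    refine ⟨_, h, ?_⟩
    have := tree_path_length htree hp.of_cons
    rw [← hpl, SimpleGraph.Walk.length_cons, this]

lemma tree_toward_unique {a w w' x : V} (h1 : G.Adj a w) (h2 : G.Adj a w')
    (d1 : G.dist a x = G.dist w x + 1) (d2 : G.dist a x = G.dist w' x + 1) : w = w' := by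
  obtain ⟨p, hp, hpl⟩ := (htree.isConnected w x).exists_path_of_dist
  obtain ⟨p', hp', hpl'⟩ := (htree.isConnected w' x).exists_path_of_dist
  classical
  have hap : a ∉ p.support := by
    intro ha
    have hsplit := p.take_spec ha
    have hh1 : (p.takeUntil a ha).length = G.dist w a :=
      tree_path_length htree (hp.takeUntil ha)
    have hh2 : (p.dropUntil a ha).length = G.dist a x :=
      tree_path_length htree (hp.dropUntil ha)
    have h3 : G.dist w a = 1 := dist_eq_one_iff_adj.mpr h1.symm
    have := congrArg SimpleGraph.Walk.length hsplit
    rw [SimpleGraph.Walk.length_append, hh1, hh2, h3, hpl] at this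
    omega
  have hap' : a ∉ p'.support := by
    intro ha
    have hsplit := p'.take_spec ha
    have hh1 : (p'.takeUntil a ha).length = G.dist w' a :=
      tree_path_length htree (hp'.takeUntil ha)
    have hh2 : (p'.dropUntil a ha).length = G.dist a x :=
      tree_path_length htree (hp'.dropUntil ha)
    have h3 : G.dist w' a = 1 := dist_eq_one_iff_adj.mpr h2.symm
    have := congrArg SimpleGraph.Walk.length hsplit
    rw [SimpleGraph.Walk.length_append, hh1, hh2, h3, hpl'] at this
    omega
  have hq1 : (p.cons h1).IsPath := hp.cons hap
  have hq2 : (p'.cons h2).IsPath := hp'.cons hap'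
  have heq := (htree.existsUnique_path a x).unique hq1 hq2
  have := congrArg SimpleGraph.Walk.support heq
  rw [SimpleGraph.Walk.support_cons, SimpleGraph.Walk.support_cons,
    p.support_eq_cons, p'.support_eq_cons] at this
  exact (List.cons.injEq _ _ _ _).mp ((List.cons.injEq _ _ _ _).mp this).2 |>.1


/-- a point in the cone of `u ≠ a` at `x` is in the cone of `x` at `a`. -/
lemma tree_cone_step {a x u t : V} (hax : G.Adj a x) (hxu : G.Adj x u) (hua : u ≠ a)
    (ht : G.dist x t = G.dist u t + 1) : G.dist a t = G.dist x t + 1 := by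
  rcases tree_dist_dichotomy htree hax t with h | h
  · exact h
  · exact absurd (tree_toward_unique htree hxu hax.symm ht h) hua

lemma tree_cone_split {a x t : V} (hax : G.Adj a x) (hat : G.dist a t = G.dist x t + 1)
    (htx : t ≠ x) : ∃ u, G.Adj x u ∧ u ≠ a ∧ G.dist x t = G.dist u t + 1 := by
  obtain ⟨u, hxu, hd⟩ := tree_exists_toward htree htx
  refine ⟨u, hxu, ?_, hd⟩
  rintro rfl
  omega

/-- key separation lemma with strengthened induction -/
lemma tree_cone_sep_aux {a w w' y : V} (hw : G.Adj a w) (hw' : G.Adj a w') (hne : w ≠ w')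
    (hy : G.dist a y = G.dist w' y + 1) :
    ∀ k x, G.dist w x = k → G.dist a x = k + 1 →
      G.dist x y = (k + 1) + G.dist a y ∧
      ∀ z, G.Adj x z → G.dist x y = G.dist z y + 1 → G.dist a z + 1 = G.dist a x := by
  have hconn := htree.isConnected
  intro k
  induction k with
  | zero =>
    intro x hx0 hx1
    have hxw : x = w := (hconn.dist_eq_zero_iff.mp (by rw [dist_comm]; exact hx0))
    subst hxw
    have h1 : G.dist x y = G.dist a y + 1 := by
      rcases tree_dist_dichotomy htree hw y with h | h
      · exact absurd (tree_toward_unique htree hw hw' h hy) hne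
      · exact h
    refine ⟨by omega, ?_⟩
    intro z hz hzy
    have haz : a = z := tree_toward_unique htree hw.symm hz (by omega) hzy
    subst haz
    have : G.dist a a = 0 := hconn.dist_eq_zero_iff.mpr rfl
    have : G.dist a x = 1 := by omega
    omega
  | succ k ih =>
    intro x hx0 hx1
    -- find u' := the neighbor of x toward w
    have hxw : x ≠ w := by
      intro h
      rw [h, hconn.dist_eq_zero_iff.mpr rfl] at hx0
      omega
    obtain ⟨u, hxu, hd⟩ := tree_exists_toward htree (a := x) (x := w) (by
      intro h; exact hxw h.symm)
    rw [dcomm G x w, dcomm G u w] at hd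
    -- dist w u = k
    have hwu : G.dist w u = k := by omega
    have hau : G.dist a u = k + 1 := by
      have hle : G.dist a u ≤ k + 1 := by
        calc G.dist a u ≤ G.dist a w + G.dist w u := hconn.dist_triangle
        _ = k + 1 := by rw [dist_eq_one_iff_adj.mpr hw, hwu]; omega
      rcases tree_dist_dichotomy htree hxu a with h | h
      · rw [dcomm G x a, dcomm G u a] at h; omega
      · rw [dcomm G x a, dcomm G u a] at h; omega
    obtain ⟨ihu1, ihu2⟩ := ih u hwu hau
    have h1 : G.dist x y = (k + 2) + G.dist a y := by
      rcases tree_dist_dichotomy htree hxu y with h | h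
      · rw [h, ihu1]; omega
      · exfalso
        have := ihu2 x hxu.symm h
        omega
    refine ⟨h1, ?_⟩
    intro z hz hzy
    have hxyu : G.dist x y = G.dist u y + 1 := by omega
    have hzu : z = u := tree_toward_unique htree hz hxu hzy hxyu
    subst hzu
    omega

/-- distance additivity across the root of two different cones -/
lemma tree_dist_add {a w w' x y : V} (hw : G.Adj a w) (hw' : G.Adj a w') (hne : w ≠ w')
    (hx : G.dist a x = G.dist w x + 1) (hy : G.dist a y = G.dist w' y + 1) :
    G.dist x y = G.dist x a + G.dist a y := by
  have := (tree_cone_sep_aux htree hw hw' hne hy (G.dist w x) x rfl hx).1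
  rw [dcomm G x a]
  omega

end Tree


lemma ballEquiv_refl (n : ℕ) (u : V) : BallEquiv G φ n u u :=
  ⟨id, rfl, fun _ _ _ _ => rfl, fun _ _ => rfl, fun z hz => ⟨z, hz, rfl⟩⟩

lemma ballEquiv_mono {m n : ℕ} (hmn : m ≤ n) {u v : V} (h : BallEquiv G φ n u v) :
    BallEquiv G φ m u v := by
  obtain ⟨f, hfu, hdist, hcol, hsurj⟩ := h
  refine ⟨f, hfu, fun x y hx hy => hdist x y (hx.trans hmn) (hy.trans hmn),
    fun x hx => hcol x (hx.trans hmn), fun z hz => ?_⟩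
  obtain ⟨x, hx, hfx⟩ := hsurj z (hz.trans hmn)
  have : G.dist v z = G.dist u x := by
    rw [← hfx, ← hfu]
    exact hdist u x (by rw [SimpleGraph.dist_self]; omega) hx
  exact ⟨x, by omega, hfx⟩

lemma ballEquiv_trans {n : ℕ} {u v w : V} (h1 : BallEquiv G φ n u v)
    (h2 : BallEquiv G φ n v w) : BallEquiv G φ n u w := by
  obtain ⟨f, hfu, hdist, hcol, hsurj⟩ := h1
  obtain ⟨g, hgu, hdist', hcol', hsurj'⟩ := h2
  have hker : ∀ x, G.dist u x ≤ n → G.dist v (f x) ≤ n := by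
    intro x hx
    rw [← hfu, hdist u x (by rw [SimpleGraph.dist_self]; omega) hx]
    exact hx
  refine ⟨g ∘ f, by simp [hfu, hgu], fun x y hx hy => ?_, fun x hx => ?_, fun z hz => ?_⟩
  · simp only [Function.comp_apply]
    rw [hdist' _ _ (hker x hx) (hker y hy), hdist x y hx hy]
  · simp only [Function.comp_apply]
    rw [hcol' _ (hker x hx), hcol x hx]
  · obtain ⟨y, hy, hgy⟩ := hsurj' z hz
    obtain ⟨x, hx, hfx⟩ := hsurj y hy
    exact ⟨x, hx, by simp [hfx, hgy]⟩

lemma ballEquiv_symm (hconn : G.Connected) {n : ℕ} {u v : V} (h : BallEquiv G φ n u v) :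
    BallEquiv G φ n v u := by
  classical
  obtain ⟨f, hfu, hdist, hcol, hsurj⟩ := h
  have hball : ∀ x, G.dist u x ≤ n → G.dist v (f x) = G.dist u x := by
    intro x hx
    rw [← hfu]
    exact hdist u x (by rw [SimpleGraph.dist_self]; omega) hx
  have hinj : ∀ x y, G.dist u x ≤ n → G.dist u y ≤ n → f x = f y → x = y := by
    intro x y hx hy hxy
    have := hdist x y hx hy
    rw [hxy] at this
    rw [SimpleGraph.dist_self] at this
    exact (hconn.dist_eq_zero_iff.mp this.symm)
  choose pre hpre1 hpre2 using hsurj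
  refine ⟨fun z => if h : G.dist v z ≤ n then pre z h else u, ?_, ?_, ?_, ?_⟩
  · have h0 : G.dist v v ≤ n := by rw [SimpleGraph.dist_self]; omega
    simp only [h0, dif_pos]
    apply hinj _ _ (hpre1 v h0) (by rw [SimpleGraph.dist_self]; omega)
    rw [hpre2 v h0, hfu]
  · intro z z' hz hz'
    simp only [hz, hz', dif_pos]
    have e1 := hball _ (hpre1 z hz)
    rw [hpre2 z hz] at e1
    have := hdist _ _ (hpre1 z hz) (hpre1 z' hz')
    rw [hpre2 z hz, hpre2 z' hz'] at this
    exact this.symm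
  · intro z hz
    simp only [hz, dif_pos]
    have := hcol _ (hpre1 z hz)
    rw [hpre2 z hz] at this
    exact this.symm
  · intro x hx
    refine ⟨f x, by rw [hball x hx]; exact hx, ?_⟩
    have hfx : G.dist v (f x) ≤ n := by rw [hball x hx]; exact hx
    simp only [hfx, dif_pos]
    exact hinj _ _ (hpre1 _ hfx) hx (hpre2 _ hfx)


/-- `t` belongs to the cone (branch) of depth `m` at the neighbor `w` of `u`,
pointing away from `u`. -/
def InCone (G : SimpleGraph V) (u w : V) (m : ℕ) (t : V) : Prop :=
  G.dist w t ≤ m ∧ G.dist u t = G.dist w t + 1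

/-- Equivalence of colored cones. -/
def ConeEquiv (G : SimpleGraph V) (φ : V → A) (m : ℕ) (u w v z : V) : Prop :=
  ∃ f : V → V,
    (∀ t, InCone G u w m t →
      InCone G v z m (f t) ∧ G.dist z (f t) = G.dist w t ∧ φ (f t) = φ t) ∧
    (∀ t t', InCone G u w m t → InCone G u w m t' → G.dist (f t) (f t') = G.dist t t') ∧
    (∀ r, InCone G v z m r → ∃ t, InCone G u w m t ∧ f t = r)

variable {G : SimpleGraph V} {φ : V → A}

lemma inCone_self {u w : V} (h : G.Adj u w) (m : ℕ) : InCone G u w m w := by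
  constructor
  · rw [SimpleGraph.dist_self]; omega
  · rw [SimpleGraph.dist_self, dist_eq_one_iff_adj.mpr h]

lemma coneEquiv_apex (hconn : G.Connected) {m : ℕ} {u w v z : V} (hadj : G.Adj u w)
    (h : ConeEquiv G φ m u w v z) :
    ∀ f : V → V,
      ((∀ t, InCone G u w m t →
        InCone G v z m (f t) ∧ G.dist z (f t) = G.dist w t ∧ φ (f t) = φ t) →
      f w = z) := by
  intro f hf
  have := (hf w (inCone_self hadj m)).2.1
  rw [SimpleGraph.dist_self] at this
  rw [dist_comm] at this
  exact (hconn.dist_eq_zero_iff.mp this.symm.symm)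

lemma coneEquiv_trans {m : ℕ} {u w v z v' z' : V}
    (h1 : ConeEquiv G φ m u w v z) (h2 : ConeEquiv G φ m v z v' z') :
    ConeEquiv G φ m u w v' z' := by
  obtain ⟨f, hf, hfd, hfs⟩ := h1
  obtain ⟨g, hg, hgd, hgs⟩ := h2
  refine ⟨g ∘ f, fun t ht => ?_, fun t t' ht ht' => ?_, fun r hr => ?_⟩
  · obtain ⟨hin, hd, hc⟩ := hf t ht
    obtain ⟨hin', hd', hc'⟩ := hg _ hin
    exact ⟨hin', by simp only [Function.comp_apply]; rw [hd', hd],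
      by simp only [Function.comp_apply]; rw [hc', hc]⟩
  · simp only [Function.comp_apply]
    rw [hgd _ _ (hf t ht).1 (hf t' ht').1, hfd t t' ht ht']
  · obtain ⟨s, hs, hgs'⟩ := hgs r hr
    obtain ⟨t, ht, hft⟩ := hfs s hs
    exact ⟨t, ht, by simp [hft, hgs']⟩

lemma coneEquiv_symm (hconn : G.Connected) {m : ℕ} {u w v z : V} (hwit : V)
    (h : ConeEquiv G φ m u w v z) : ConeEquiv G φ m v z u w := by
  classical
  obtain ⟨f, hf, hfd, hfs⟩ := h
  have hinj : ∀ t t', InCone G u w m t → InCone G u w m t' → f t = f t' → t = t' := by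
    intro t t' ht ht' he
    have := hfd t t' ht ht'
    rw [he, SimpleGraph.dist_self] at this
    exact hconn.dist_eq_zero_iff.mp this.symm
  choose pre hpre1 hpre2 using hfs
  refine ⟨fun r => if h : InCone G v z m r then pre r h else hwit,
    fun r hr => ?_, fun r r' hr hr' => ?_, fun t ht => ?_⟩
  · simp only [hr, dif_pos]
    obtain ⟨hin, hd, hc⟩ := hf _ (hpre1 r hr)
    rw [hpre2 r hr] at hd hc
    exact ⟨hpre1 r hr, by rw [← hd], by rw [← hc]⟩
  · simp only [hr, hr', dif_pos]
    have := hfd _ _ (hpre1 r hr) (hpre1 r' hr')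
    rw [hpre2 r hr, hpre2 r' hr'] at this
    exact this.symm
  · have hft : InCone G v z m (f t) := (hf t ht).1
    refine ⟨f t, hft, ?_⟩
    simp only [hft, dif_pos]
    exact hinj _ _ (hpre1 _ hft) ht (hpre2 _ hft)

section restrict

/-- the realization map of a ball equivalence sends neighbors to neighbors -/
lemma ballEquiv_adj {m : ℕ} {x y t : V} {f : V → V} (hfx : f x = y)
    (hdist : ∀ s s' : V, G.dist x s ≤ m + 1 → G.dist x s' ≤ m + 1 →
      G.dist (f s) (f s') = G.dist s s')
    (ht : G.Adj x t) : G.Adj y (f t) := by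
  have h1 : G.dist x t = 1 := dist_eq_one_iff_adj.mpr ht
  have := hdist x t (by rw [SimpleGraph.dist_self]; omega) (by omega)
  rw [hfx, h1] at this
  exact dist_eq_one_iff_adj.mp this

/-- a ball equivalence of radius `m+1` restricts to a cone equivalence of depth `m`
at each neighbor. -/
lemma ballEquiv_cone_restrict {m : ℕ} {x y t : V} {f : V → V} (hfx : f x = y)
    (hdist : ∀ s s' : V, G.dist x s ≤ m + 1 → G.dist x s' ≤ m + 1 →
      G.dist (f s) (f s') = G.dist s s')
    (hcol : ∀ s : V, G.dist x s ≤ m + 1 → φ (f s) = φ s)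
    (hsurj : ∀ r : V, G.dist y r ≤ m + 1 → ∃ s : V, G.dist x s ≤ m + 1 ∧ f s = r)
    (ht : G.Adj x t) : ConeEquiv G φ m x t y (f t) := by
  have hx0 : G.dist x x ≤ m + 1 := by rw [SimpleGraph.dist_self]; omega
  have hxt : G.dist x t = 1 := dist_eq_one_iff_adj.mpr ht
  have hball : ∀ s, InCone G x t m s → G.dist x s ≤ m + 1 := fun s hs => by
    obtain ⟨h1, h2⟩ := hs; omega
  have hyd : ∀ s, G.dist x s ≤ m + 1 → G.dist y (f s) = G.dist x s := by
    intro s hs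
    rw [← hfx]
    exact hdist x s hx0 hs
  have htd : ∀ s, InCone G x t m s → G.dist (f t) (f s) = G.dist t s := by
    intro s hs
    exact hdist t s (by omega) (hball s hs)
  refine ⟨f, fun s hs => ?_, fun s s' hs hs' => hdist s s' (hball s hs) (hball s' hs'),
    fun r hr => ?_⟩
  · obtain ⟨h1, h2⟩ := hs
    refine ⟨⟨by rw [htd s ⟨h1, h2⟩]; exact h1, ?_⟩, by rw [htd s ⟨h1, h2⟩], ?_⟩
    · rw [htd s ⟨h1, h2⟩, hyd s (hball s ⟨h1, h2⟩), h2]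
    · exact hcol s (hball s ⟨h1, h2⟩)
  · obtain ⟨h1, h2⟩ := hr
    obtain ⟨s, hs, hfs⟩ := hsurj r (by omega)
    have hd1 : G.dist t s = G.dist (f t) r := by rw [← hfs]; exact (hdist t s (by omega) hs).symm
    have hd2 : G.dist x s = G.dist y r := by rw [← hfs]; exact (hyd s hs).symm
    exact ⟨s, ⟨by omega, by omega⟩, hfs⟩

end restrict


section Glue
variable (htree : G.IsTree)
include htree

/-- Glue cone equivalences of depth `m` at the neighbors of `x` other than `a` into a
cone equivalence of depth `m+1` on the cone of `x` seen from `a`. -/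
lemma coneEquiv_glue {m : ℕ} {a x b y : V} (hax : G.Adj a x) (hby : G.Adj b y)
    (hcol : φ x = φ y) (τ : V → V)
    (hτ : ∀ t, G.Adj x t → t ≠ a → G.Adj y (τ t) ∧ τ t ≠ b ∧ ConeEquiv G φ m x t y (τ t))
    (hinj : ∀ t t', G.Adj x t → t ≠ a → G.Adj x t' → t' ≠ a → τ t = τ t' → t = t')
    (hsurj : ∀ r, G.Adj y r → r ≠ b → ∃ t, G.Adj x t ∧ t ≠ a ∧ τ t = r) :
    ConeEquiv G φ (m + 1) a x b y := by
  classical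
  have hconn := htree.isConnected
  -- choose realization maps for each admissible neighbor
  have hgex : ∀ u : V, ∃ g : V → V, G.Adj x u → u ≠ a →
      ((∀ t, InCone G x u m t →
        InCone G y (τ u) m (g t) ∧ G.dist (τ u) (g t) = G.dist u t ∧ φ (g t) = φ t) ∧
      (∀ t t', InCone G x u m t → InCone G x u m t' → G.dist (g t) (g t') = G.dist t t') ∧
      (∀ r, InCone G y (τ u) m r → ∃ t, InCone G x u m t ∧ g t = r)) := by
    intro u
    by_cases h : G.Adj x u ∧ u ≠ a
    · obtain ⟨g, hg⟩ := (hτ u h.1 h.2).2.2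
      exact ⟨g, fun _ _ => hg⟩
    · exact ⟨id, fun h1 h2 => absurd ⟨h1, h2⟩ h⟩
  choose g hgspec using hgex
  set F : V → V := fun s =>
    if h : ∃ u, (G.Adj x u ∧ u ≠ a) ∧ G.dist x s = G.dist u s + 1 then g h.choose s else y
    with hF
  have hFx : F x = y := by
    rw [hF]
    have : ¬ ∃ u, (G.Adj x u ∧ u ≠ a) ∧ G.dist x x = G.dist u x + 1 := by
      rintro ⟨u, _, hd⟩
      rw [SimpleGraph.dist_self] at hd
      omega
    simp only [this, dif_neg, not_false_iff]
  -- the key computation rule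
  have key : ∀ s u, G.Adj x u → u ≠ a → G.dist x s = G.dist u s + 1 →
      F s = g u s := by
    intro s u h1 h2 h3
    have hex : ∃ u, (G.Adj x u ∧ u ≠ a) ∧ G.dist x s = G.dist u s + 1 := ⟨u, ⟨h1, h2⟩, h3⟩
    rw [hF]
    simp only [hex, dif_pos]
    obtain ⟨⟨hu1, hu2⟩, hu3⟩ := hex.choose_spec
    rw [tree_toward_unique htree hu1 h1 hu3 h3]
  -- basic facts for points in the target cone
  have hsplit : ∀ s, InCone G a x (m+1) s → s ≠ x →
      ∃ u, G.Adj x u ∧ u ≠ a ∧ InCone G x u m s := by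
    intro s hs hsx
    obtain ⟨h1, h2⟩ := hs
    obtain ⟨u, hu1, hu2, hu3⟩ := tree_cone_split htree hax h2 hsx
    exact ⟨u, hu1, hu2, ⟨by omega, hu3⟩⟩
  -- image facts
  have himg : ∀ s, InCone G a x (m+1) s →
      InCone G b y (m+1) (F s) ∧ G.dist y (F s) = G.dist x s ∧ φ (F s) = φ s := by
    intro s hs
    by_cases hsx : s = x
    · subst hsx
      rw [hFx]
      refine ⟨⟨?_, ?_⟩, ?_, hcol.symm⟩
      · rw [SimpleGraph.dist_self]; omega
      · rw [SimpleGraph.dist_self, dist_eq_one_iff_adj.mpr hby]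
      · rw [SimpleGraph.dist_self, SimpleGraph.dist_self]
    · obtain ⟨u, hu1, hu2, hu3⟩ := hsplit s hs hsx
      rw [key s u hu1 hu2 hu3.2]
      obtain ⟨hin, hd, hc⟩ := ((hgspec u hu1 hu2).1) s hu3
      obtain ⟨hτ1, hτ2, _⟩ := hτ u hu1 hu2
      have hyd : G.dist y (g u s) = G.dist x s := by
        obtain ⟨q1, q2⟩ := hin
        rw [q2, hd, hu3.2]
      have hbd : G.dist b (g u s) = G.dist y (g u s) + 1 :=
        tree_cone_step htree hby hτ1 hτ2 hin.2
      exact ⟨⟨by rw [hyd]; exact hs.1, by rw [hbd]⟩, hyd, hc⟩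
  refine ⟨F, himg, ?_, ?_⟩
  · -- distances
    intro s s' hs hs'
    by_cases hsx : s = x
    · rw [hsx, hFx]
      exact (himg s' hs').2.1
    · by_cases hsx' : s' = x
      · rw [hsx', hFx, dcomm G (F s) y, (himg s hs).2.1, dcomm G x s]
      · obtain ⟨u, hu1, hu2, hu3⟩ := hsplit s hs hsx
        obtain ⟨u', hu1', hu2', hu3'⟩ := hsplit s' hs' hsx'
        by_cases huu : u = u'
        · subst huu
          rw [key s u hu1 hu2 hu3.2, key s' u hu1 hu2 hu3'.2]
          exact (hgspec u hu1 hu2).2.1 s s' hu3 hu3'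
        · -- different subcones
          rw [key s u hu1 hu2 hu3.2, key s' u' hu1' hu2' hu3'.2]
          obtain ⟨hin, hd, _⟩ := ((hgspec u hu1 hu2).1) s hu3
          obtain ⟨hin', hd', _⟩ := ((hgspec u' hu1' hu2').1) s' hu3'
          obtain ⟨hτ1, hτ2, _⟩ := hτ u hu1 hu2
          obtain ⟨hτ1', hτ2', _⟩ := hτ u' hu1' hu2'
          have hττ : τ u ≠ τ u' := fun h => huu (hinj u u' hu1 hu2 hu1' hu2' h)
          have e1 : G.dist s s' = G.dist s x + G.dist x s' :=
            tree_dist_add htree hu1 hu1' huu hu3.2 hu3'.2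
          have e2 : G.dist (g u s) (g u' s') =
              G.dist (g u s) y + G.dist y (g u' s') :=
            tree_dist_add htree hτ1 hτ1' hττ hin.2 hin'.2
          have e3 : G.dist y (g u s) = G.dist x s := by
            obtain ⟨q1, q2⟩ := hin; rw [q2, hd, hu3.2]
          have e4 : G.dist y (g u' s') = G.dist x s' := by
            obtain ⟨q1, q2⟩ := hin'; rw [q2, hd', hu3'.2]
          rw [e2, e1, dcomm G (g u s) y, e3, e4, dcomm G s x]
  · -- surjectivity
    intro r hr
    by_cases hry : r = y
    · subst hry
      refine ⟨x, ⟨?_, ?_⟩, hFx⟩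
      · rw [SimpleGraph.dist_self]; omega
      · rw [SimpleGraph.dist_self, dist_eq_one_iff_adj.mpr hax]
    · obtain ⟨v, hv1, hv2, hv3⟩ := tree_cone_split htree hby hr.2 hry
      obtain ⟨t, ht1, ht2, ht3⟩ := hsurj v hv1 hv2
      have hrin : InCone G y v m r := ⟨by obtain ⟨q1, _⟩ := hr; omega, hv3⟩
      rw [← ht3] at hrin
      obtain ⟨s, hsin, hgs⟩ := (hgspec t ht1 ht2).2.2 r hrin
      refine ⟨s, ?_, ?_⟩
      · have : G.dist a s = G.dist x s + 1 :=
          tree_cone_step htree hax ht1 ht2 hsin.2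
        exact ⟨by obtain ⟨q1, q2⟩ := hsin; omega, this⟩
      · rw [key s t ht1 ht2 hsin.2, hgs]

end Glue

/-- Glue cone equivalences of depth `n` at all the neighbors of `a` into a ball
equivalence of radius `n+1`. -/
lemma ballEquiv_glue (htree2 : G.IsTree) {n : ℕ} {a b : V} (hcol : φ a = φ b)
    (σ : V → V)
    (hσ : ∀ w, G.Adj a w → G.Adj b (σ w) ∧ ConeEquiv G φ n a w b (σ w))
    (hinj : ∀ w w', G.Adj a w → G.Adj a w' → σ w = σ w' → w = w')
    (hsurj : ∀ r, G.Adj b r → ∃ w, G.Adj a w ∧ σ w = r) :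
    BallEquiv G φ (n + 1) a b := by
  classical
  have hconn := htree2.isConnected
  have hgex : ∀ w : V, ∃ g : V → V, G.Adj a w →
      ((∀ t, InCone G a w n t →
        InCone G b (σ w) n (g t) ∧ G.dist (σ w) (g t) = G.dist w t ∧ φ (g t) = φ t) ∧
      (∀ t t', InCone G a w n t → InCone G a w n t' → G.dist (g t) (g t') = G.dist t t') ∧
      (∀ r, InCone G b (σ w) n r → ∃ t, InCone G a w n t ∧ g t = r)) := by
    intro w
    by_cases h : G.Adj a w
    · obtain ⟨g, hg⟩ := (hσ w h).2
      exact ⟨g, fun _ => hg⟩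
    · exact ⟨id, fun h1 => absurd h1 h⟩
  choose g hgspec using hgex
  set F : V → V := fun s =>
    if h : ∃ w, G.Adj a w ∧ G.dist a s = G.dist w s + 1 then g h.choose s else b
    with hF
  have hFa : F a = b := by
    rw [hF]
    have : ¬ ∃ w, G.Adj a w ∧ G.dist a a = G.dist w a + 1 := by
      rintro ⟨w, _, hd⟩
      rw [SimpleGraph.dist_self] at hd
      omega
    simp only [this, dif_neg, not_false_iff]
  have key : ∀ s w, G.Adj a w → G.dist a s = G.dist w s + 1 → F s = g w s := by
    intro s w h1 h3
    have hex : ∃ w, G.Adj a w ∧ G.dist a s = G.dist w s + 1 := ⟨w, h1, h3⟩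
    rw [hF]
    simp only [hex, dif_pos]
    obtain ⟨hu1, hu3⟩ := hex.choose_spec
    rw [tree_toward_unique htree2 hu1 h1 hu3 h3]
  have hsplit : ∀ s, G.dist a s ≤ n + 1 → s ≠ a →
      ∃ w, G.Adj a w ∧ InCone G a w n s := by
    intro s hs hsa
    obtain ⟨w, hw1, hw2⟩ := tree_exists_toward htree2 hsa
    exact ⟨w, hw1, ⟨by omega, hw2⟩⟩
  have himg : ∀ s, G.dist a s ≤ n + 1 →
      G.dist b (F s) = G.dist a s ∧ φ (F s) = φ s := by
    intro s hs
    by_cases hsa : s = a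
    · rw [hsa, hFa, SimpleGraph.dist_self, SimpleGraph.dist_self]
      exact ⟨rfl, hcol.symm⟩
    · obtain ⟨w, hw1, hw2⟩ := hsplit s hs hsa
      rw [key s w hw1 hw2.2]
      obtain ⟨hin, hd, hc⟩ := (hgspec w hw1).1 s hw2
      refine ⟨?_, hc⟩
      rw [hin.2, hd, hw2.2]
  refine ⟨F, hFa, ?_, fun s hs => (himg s hs).2, ?_⟩
  · intro s s' hs hs'
    by_cases hsa : s = a
    · rw [hsa, hFa]
      exact (himg s' hs').1
    · by_cases hsa' : s' = a
      · rw [hsa', hFa, dcomm G (F s) b, (himg s hs).1, dcomm G a s]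
      · obtain ⟨w, hw1, hw2⟩ := hsplit s hs hsa
        obtain ⟨w', hw1', hw2'⟩ := hsplit s' hs' hsa'
        by_cases hww : w = w'
        · subst hww
          rw [key s w hw1 hw2.2, key s' w hw1 hw2'.2]
          exact (hgspec w hw1).2.1 s s' hw2 hw2'
        · rw [key s w hw1 hw2.2, key s' w' hw1' hw2'.2]
          obtain ⟨hin, hd, _⟩ := (hgspec w hw1).1 s hw2
          obtain ⟨hin', hd', _⟩ := (hgspec w' hw1').1 s' hw2'
          have hσσ : σ w ≠ σ w' := fun h => hww (hinj w w' hw1 hw1' h)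
          have e1 : G.dist s s' = G.dist s a + G.dist a s' :=
            tree_dist_add htree2 hw1 hw1' hww hw2.2 hw2'.2
          have e2 : G.dist (g w s) (g w' s') =
              G.dist (g w s) b + G.dist b (g w' s') :=
            tree_dist_add htree2 (hσ w hw1).1 (hσ w' hw1').1 hσσ hin.2 hin'.2
          have e3 : G.dist b (g w s) = G.dist a s := by rw [hin.2, hd, hw2.2]
          have e4 : G.dist b (g w' s') = G.dist a s' := by rw [hin'.2, hd', hw2'.2]
          rw [e2, e1, dcomm G (g w s) b, e3, e4, dcomm G s a]
  · intro r hr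
    by_cases hrb : r = b
    · exact ⟨a, by rw [SimpleGraph.dist_self]; omega, by rw [hFa, hrb]⟩
    · obtain ⟨v, hv1, hv2⟩ := tree_exists_toward htree2 hrb
      obtain ⟨t, ht1, ht3⟩ := hsurj v hv1
      have hrin : InCone G b v n r := ⟨by omega, hv2⟩
      rw [← ht3] at hrin
      obtain ⟨s, hsin, hgs⟩ := (hgspec t ht1).2.2 r hrin
      refine ⟨s, by obtain ⟨q1, q2⟩ := hsin; omega, ?_⟩
      rw [key s t ht1 hsin.2, hgs]


lemma ballEquiv_color {n : ℕ} {u v : V} (h : BallEquiv G φ n u v) : φ v = φ u := by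
  obtain ⟨f, hfu, _, hcol, _⟩ := h
  rw [← hfu]
  exact hcol u (by rw [SimpleGraph.dist_self]; omega)

/-- extract a neighbor system from a ball equivalence of radius `k+1` -/
lemma ballEquiv_neighbor_system (hconn : G.Connected) {k : ℕ} {w z : V}
    (h : BallEquiv G φ (k + 1) w z) :
    ∃ f : V → V, f w = z ∧
      (∀ t, G.Adj w t → G.Adj z (f t) ∧ ConeEquiv G φ k w t z (f t)) ∧
      (∀ t t', G.Adj w t → G.Adj w t' → f t = f t' → t = t') ∧
      (∀ r, G.Adj z r → ∃ t, G.Adj w t ∧ f t = r) := by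
  obtain ⟨f, hfw, hdist, hcol, hsurj⟩ := h
  have h0 : G.dist w w ≤ k + 1 := by rw [SimpleGraph.dist_self]; omega
  have hadj : ∀ t, G.Adj w t → G.Adj z (f t) := by
    intro t ht
    have h1 : G.dist w t = 1 := dist_eq_one_iff_adj.mpr ht
    have := hdist w t h0 (by omega)
    rw [hfw, h1] at this
    exact dist_eq_one_iff_adj.mp this
  refine ⟨f, hfw, fun t ht => ⟨hadj t ht, ballEquiv_cone_restrict hfw hdist hcol hsurj ht⟩,
    fun t t' ht ht' he => ?_, fun r hr => ?_⟩
  · have h1 : G.dist w t = 1 := dist_eq_one_iff_adj.mpr ht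
    have h1' : G.dist w t' = 1 := dist_eq_one_iff_adj.mpr ht'
    have := hdist t t' (by omega) (by omega)
    rw [he, SimpleGraph.dist_self] at this
    exact hconn.dist_eq_zero_iff.mp this.symm
  · have h1 : G.dist z r = 1 := dist_eq_one_iff_adj.mpr hr
    obtain ⟨t, ht, hft⟩ := hsurj r (by omega)
    have : G.dist w t = 1 := by
      have := hdist w t h0 ht
      rw [hfw, hft, h1] at this
      omega
    exact ⟨t, dist_eq_one_iff_adj.mp this, hft⟩

/-- swap lemma: modify a matching of cones to avoid given matched marked neighbors -/
lemma cone_swap (hconn : G.Connected) {m : ℕ} {x a y b : V} (g : V → V)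
    (hg : ∀ t, G.Adj x t → G.Adj y (g t) ∧ ConeEquiv G φ m x t y (g t))
    (hginj : ∀ t t', G.Adj x t → G.Adj x t' → g t = g t' → t = t')
    (hgsurj : ∀ r, G.Adj y r → ∃ t, G.Adj x t ∧ g t = r)
    (hxa : G.Adj x a) (hyb : G.Adj y b)
    (hcone : ConeEquiv G φ m x a y b) :
    ∃ τ : V → V,
      (∀ t, G.Adj x t → t ≠ a → G.Adj y (τ t) ∧ τ t ≠ b ∧ ConeEquiv G φ m x t y (τ t)) ∧
      (∀ t t', G.Adj x t → t ≠ a → G.Adj x t' → t' ≠ a → τ t = τ t' → t = t') ∧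
      (∀ r, G.Adj y r → r ≠ b → ∃ t, G.Adj x t ∧ t ≠ a ∧ τ t = r) := by
  classical
  obtain ⟨p, hp, hgp⟩ := hgsurj b hyb
  refine ⟨fun t => if t = p then g a else g t, ?_, ?_, ?_⟩
  · intro t ht hta
    by_cases htp : t = p
    · simp only [htp, if_pos]
      refine ⟨(hg a hxa).1, ?_, ?_⟩
      · intro hgab
        exact hta (by rw [htp]; exact (hginj a p hxa hp (by rw [hgab, hgp])).symm ▸ rfl)
      · -- cone(x→p) ≅ cone(y→b) ≅ cone(x→a) ≅ cone(y→g a)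
        have c1 : ConeEquiv G φ m x p y b := by rw [← hgp]; exact (hg p hp).2
        have c2 : ConeEquiv G φ m y b x a := coneEquiv_symm hconn x hcone
        exact coneEquiv_trans (coneEquiv_trans c1 c2) (hg a hxa).2
    · simp only [htp, if_neg, ite_false]
      refine ⟨(hg t ht).1, ?_, (hg t ht).2⟩
      intro hgt
      exact htp (hginj t p ht hp (by rw [hgt, hgp]))
  · intro t t' ht hta ht' hta' he
    by_cases htp : t = p <;> by_cases htp' : t' = p
    · rw [htp, htp']
    · simp only [htp, htp', if_pos, if_neg, ite_false, ite_true] at he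
      exact absurd (hginj a t' hxa ht' he).symm hta'
    · simp only [htp, htp', if_pos, if_neg, ite_false, ite_true] at he
      exact absurd (hginj t a ht hxa he) hta
    · simp only [htp, htp', if_neg, ite_false] at he
      exact hginj t t' ht ht' he
  · intro r hr hrb
    obtain ⟨t₀, ht₀, hgt₀⟩ := hgsurj r hr
    by_cases ht₀a : t₀ = a
    · -- r = g a ; use p
      have hpa : p ≠ a := by
        intro h
        rw [h] at hgp
        rw [← hgt₀, ht₀a, hgp] at hrb
        exact hrb rfl
      refine ⟨p, hp, hpa, ?_⟩
      simp only [if_pos]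
      exact ht₀a ▸ hgt₀
    · have ht₀p : t₀ ≠ p := by
        intro h
        rw [h, hgp] at hgt₀
        exact hrb hgt₀.symm
      exact ⟨t₀, ht₀, ht₀a, by simp only [ht₀p, if_neg, ite_false]; exact hgt₀⟩

lemma coneEquiv_zero (hconn : G.Connected) {a w b z : V} (haw : G.Adj a w)
    (hbz : G.Adj b z) (hcol : φ w = φ z) : ConeEquiv G φ 0 a w b z := by
  have hz : InCone G b z 0 z := by
    constructor
    · rw [SimpleGraph.dist_self]
    · rw [SimpleGraph.dist_self, dist_eq_one_iff_adj.mpr hbz]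
  have hwmem : InCone G a w 0 w := by
    constructor
    · rw [SimpleGraph.dist_self]
    · rw [SimpleGraph.dist_self, dist_eq_one_iff_adj.mpr haw]
  have hw : ∀ t, InCone G a w 0 t → t = w := by
    intro t ht
    have := ht.1
    have : G.dist w t = 0 := by omega
    exact (hconn.dist_eq_zero_iff.mp this).symm
  have hz' : ∀ r, InCone G b z 0 r → r = z := by
    intro r hrr
    have := hrr.1
    have : G.dist z r = 0 := by omega
    exact (hconn.dist_eq_zero_iff.mp this).symm
  refine ⟨fun _ => z, fun t ht => ?_, fun t t' ht ht' => ?_, fun r hrr => ⟨w, hwmem, (hz' r hrr).symm⟩⟩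
  · rw [hw t ht]
    exact ⟨hz, by rw [SimpleGraph.dist_self, SimpleGraph.dist_self], hcol.symm⟩
  · rw [hw t ht, hw t' ht', SimpleGraph.dist_self, SimpleGraph.dist_self]

/-- the heart: matching of neighbor balls upgrades to matching of cones of any depth -/
lemma cone_matching (htree : G.IsTree) {n : ℕ} {a b : V} (hcol : φ a = φ b) (σ : V → V)
    (hσ : ∀ w, G.Adj a w → G.Adj b (σ w) ∧ BallEquiv G φ n w (σ w))
    (hσinj : ∀ w w', G.Adj a w → G.Adj a w' → σ w = σ w' → w = w')
    (hσsurj : ∀ r, G.Adj b r → ∃ w, G.Adj a w ∧ σ w = r) :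
    ∀ m, m ≤ n → ∀ w, G.Adj a w →
      ConeEquiv G φ m a w b (σ w) ∧ ConeEquiv G φ m w a (σ w) b := by
  have hconn := htree.isConnected
  intro m
  induction m with
  | zero =>
    intro _ w hw
    have hc : φ w = φ (σ w) := (ballEquiv_color (hσ w hw).2).symm
    exact ⟨coneEquiv_zero hconn hw (hσ w hw).1 hc,
      coneEquiv_zero hconn hw.symm (hσ w hw).1.symm hcol⟩
  | succ m ih =>
    intro hm w hw
    have hm' : m ≤ n := by omega
    constructor
    · -- ConeEquiv (m+1) a w b (σ w) : glue at apex (w, σ w)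
      obtain ⟨f, hfw, hf, hfinj, hfsurj⟩ :=
        ballEquiv_neighbor_system hconn (k := m)
          (ballEquiv_mono hm (hσ w hw).2)
      obtain ⟨τ, hτ1, hτ2, hτ3⟩ := cone_swap hconn f hf hfinj hfsurj hw.symm
        ((hσ w hw).1.symm) (ih hm' w hw).2
      exact coneEquiv_glue htree hw (hσ w hw).1
        ((ballEquiv_color (hσ w hw).2).symm) τ hτ1 hτ2 hτ3
    · -- ConeEquiv (m+1) w a (σ w) b : glue at apex (a, b) using σ away from w
      refine coneEquiv_glue htree hw.symm (hσ w hw).1.symm hcol σ ?_ ?_ ?_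
      · intro t ht htw
        refine ⟨(hσ t ht).1, ?_, (ih hm' t ht).1⟩
        intro he
        exact htw (hσinj t w ht hw he)
      · intro t t' ht _ ht' _ he
        exact hσinj t t' ht ht' he
      · intro r hr hrσ
        obtain ⟨t, ht, hσt⟩ := hσsurj r hr
        refine ⟨t, ht, ?_, hσt⟩
        intro h
        rw [h] at hσt
        exact hrσ hσt.symm

/-- MAIN gluing proposition -/
lemma ballEquiv_of_neighbor_matching (htree : G.IsTree) {n : ℕ} {a b : V}
    (hcol : φ a = φ b) (σ : V → V)
    (hσ : ∀ w, G.Adj a w → G.Adj b (σ w) ∧ BallEquiv G φ n w (σ w))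
    (hσinj : ∀ w w', G.Adj a w → G.Adj a w' → σ w = σ w' → w = w')
    (hσsurj : ∀ r, G.Adj b r → ∃ w, G.Adj a w ∧ σ w = r) :
    BallEquiv G φ (n + 1) a b := by
  refine ballEquiv_glue htree hcol σ (fun w hw => ⟨(hσ w hw).1, ?_⟩) hσinj hσsurj
  exact (cone_matching htree hcol σ hσ hσinj hσsurj n le_rfl w hw).1


/-- extract a neighbor system of ball equivalences from a ball equivalence of radius `k+1` -/
lemma ballEquiv_neighbor_balls (hconn : G.Connected) {k : ℕ} {w z : V}
    (h : BallEquiv G φ (k + 1) w z) :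
    ∃ f : V → V, f w = z ∧
      (∀ t, G.Adj w t → G.Adj z (f t) ∧ BallEquiv G φ k t (f t)) ∧
      (∀ t t', G.Adj w t → G.Adj w t' → f t = f t' → t = t') ∧
      (∀ r, G.Adj z r → ∃ t, G.Adj w t ∧ f t = r) := by
  obtain ⟨f, hfw, hdist, hcol, hsurj⟩ := h
  have h0 : G.dist w w ≤ k + 1 := by rw [SimpleGraph.dist_self]; omega
  have hzd : ∀ s, G.dist w s ≤ k + 1 → G.dist z (f s) = G.dist w s := by
    intro s hs
    rw [← hfw]
    exact hdist w s h0 hs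
  have hadj : ∀ t, G.Adj w t → G.Adj z (f t) := by
    intro t ht
    have h1 : G.dist w t = 1 := dist_eq_one_iff_adj.mpr ht
    have := hzd t (by omega)
    rw [h1] at this
    exact dist_eq_one_iff_adj.mp this
  have hball : ∀ t, G.Adj w t → G.dist w t ≤ k + 1 := by
    intro t ht
    rw [dist_eq_one_iff_adj.mpr ht]
    omega
  refine ⟨f, hfw, fun t ht => ⟨hadj t ht, ?_⟩, fun t t' ht ht' he => ?_, fun r hr => ?_⟩
  · have h1 : G.dist w t = 1 := dist_eq_one_iff_adj.mpr ht
    have hmem : ∀ s, G.dist t s ≤ k → G.dist w s ≤ k + 1 := by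
      intro s hs
      calc G.dist w s ≤ G.dist w t + G.dist t s := hconn.dist_triangle
        _ ≤ k + 1 := by omega
    refine ⟨f, rfl, fun s s' hs hs' => hdist s s' (hmem s hs) (hmem s' hs'),
      fun s hs => hcol s (hmem s hs), fun r hr => ?_⟩
    have h2 : G.dist z (f t) = 1 := dist_eq_one_iff_adj.mpr (hadj t ht)
    have h3 : G.dist z r ≤ k + 1 := by
      calc G.dist z r ≤ G.dist z (f t) + G.dist (f t) r := hconn.dist_triangle
        _ ≤ k + 1 := by omega
    obtain ⟨s, hs, hfs⟩ := hsurj r h3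
    have h4 : G.dist t s = G.dist (f t) r := by
      rw [← hfs]
      exact (hdist t s (by omega) hs).symm
    exact ⟨s, by omega, hfs⟩
  · have := hdist t t' (hball t ht) (hball t' ht')
    rw [he, SimpleGraph.dist_self] at this
    exact hconn.dist_eq_zero_iff.mp this.symm
  · have h1 : G.dist z r = 1 := dist_eq_one_iff_adj.mpr hr
    obtain ⟨t, ht, hft⟩ := hsurj r (by omega)
    have : G.dist w t = 1 := by
      have := hzd t ht
      rw [hft, h1] at this
      omega
    exact ⟨t, dist_eq_one_iff_adj.mp this, hft⟩

lemma card_adj_filter_eq (G : SimpleGraph V) [G.LocallyFinite] (v : V) (P : V → Prop)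
    [DecidablePred P] :
    Nat.card {w : V // G.Adj v w ∧ P w} = ((G.neighborFinset v).filter P).card := by
  rw [← Nat.card_eq_finsetCard]
  refine Nat.card_congr (Equiv.subtypeEquivRight fun w => ?_)
  simp [SimpleGraph.mem_neighborFinset]

end Auxiliary

/-- Suppose `S_n ≠ C_n`. Then the two `(n+1)`-extensions `A_{n+1}`, `B_{n+1}` of `S_n`
cannot contain the same number of `n`-balls of class `A_n`; hence the choice of the
sequences `(A_n)`, `(B_n)` with `A_{n+1}` containing more balls of class `A_n` is
unique. -/
theorem extension_counts_differ {V A : Type*} (G : SimpleGraph V) [G.LocallyFinite]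
    (φ : V → A) [Finite A] (d : ℕ) (hd : 2 ≤ d)
    (htree : G.IsTree) (hreg : ∀ v : V, G.degree v = d)
    (hsurj : Function.Surjective φ)
    (N₀ c : ℕ) (hQS : ∀ m, N₀ ≤ m → complexity G φ m = m + c)
    (n : ℕ) (hn : N₀ + 1 ≤ n)
    -- `s` represents the unique special `n`-ball `S_n`
    (s : V) (hs : IsSpecialCenter G φ n s)
    (hsu : ∀ x : V, IsSpecialCenter G φ n x → BallEquiv G φ n s x)
    -- `a`, `b` represent the two inequivalent `(n+1)`-extensions `A_{n+1}`, `B_{n+1}` of `S_n`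
    (a b : V) (ha : BallEquiv G φ n a s) (hb : BallEquiv G φ n b s)
    (hab : ¬ BallEquiv G φ (n + 1) a b)
    -- `s'` represents `S_{n-1}`; `an`, `bn` represent its two `n`-extensions `A_n`, `B_n`
    (s' : V) (hs' : IsSpecialCenter G φ (n - 1) s')
    (an bn : V) (han : BallEquiv G φ (n - 1) an s') (hbn : BallEquiv G φ (n - 1) bn s')
    (hanbn : ¬ BallEquiv G φ n an bn)
    -- `s₁` represents `S_{n+1}`, whose radius-`n` restriction is `C_n`; assume `S_n ≠ C_n`
    (s₁ : V) (hs₁ : IsSpecialCenter G φ (n + 1) s₁)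
    (hSC : ¬ BallEquiv G φ n s s₁) :
    Nat.card {w : V // G.Adj a w ∧ BallEquiv G φ n an w} ≠
      Nat.card {w : V // G.Adj b w ∧ BallEquiv G φ n an w} := by
  classical
  intro hc
  have hconn := htree.isConnected
  have hequiv : ∀ k : ℕ, Equivalence (BallEquiv G φ k) := fun k =>
    ⟨fun u => ballEquiv_refl k u, fun h => ballEquiv_symm hconn h,
      fun h1 h2 => ballEquiv_trans h1 h2⟩
  have hmk : ∀ (k : ℕ) (u v : V),
      Quot.mk (BallEquiv G φ k) u = Quot.mk (BallEquiv G φ k) v ↔ BallEquiv G φ k u v :=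
    fun k u v => by rw [Quot.eq]; exact (hequiv k).eqvGen_iff
  obtain ⟨m, rfl⟩ : ∃ m, n = m + 1 := ⟨n - 1, by omega⟩
  rw [Nat.add_sub_cancel] at hs' han hbn
  -- counting between levels m and m+1
  have hcm : Nat.card (Quot (BallEquiv G φ m)) = m + c := hQS m (by omega)
  have hcm1 : Nat.card (Quot (BallEquiv G φ (m + 1))) = (m + 1) + c := hQS (m + 1) (by omega)
  have hfin1 : Finite (Quot (BallEquiv G φ (m + 1))) := by
    refine Nat.finite_of_card_ne_zero ?_
    omega
  set F : Quot (BallEquiv G φ (m + 1)) → Quot (BallEquiv G φ m) :=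
    Quot.map id (fun u v h => ballEquiv_mono (by omega) h) with hF
  have hFmk : ∀ u : V, F (Quot.mk _ u) = Quot.mk _ u := fun u => rfl
  have hFsurj : Function.Surjective F := by
    intro q
    obtain ⟨u, rfl⟩ := Quot.exists_rep q
    exact ⟨Quot.mk _ u, rfl⟩
  obtain ⟨hL1, hL2⟩ := fiber_count_lemma F hFsurj (by rw [hcm, hcm1]; omega)
  -- uniqueness of the special ball at level m
  have U1 : ∀ x : V, IsSpecialCenter G φ m x → BallEquiv G φ m s' x := by
    intro x hx
    obtain ⟨v', hv'1, hv'2⟩ := hs'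
    obtain ⟨v, hv1, hv2⟩ := hx
    have h1 : F (Quot.mk _ s') = F (Quot.mk _ v') := by
      rw [hFmk, hFmk, hmk]; exact hv'1
    have h2 : Quot.mk (BallEquiv G φ (m + 1)) s' ≠ Quot.mk _ v' :=
      fun h => hv'2 ((hmk _ _ _).1 h)
    have h3 : F (Quot.mk _ x) = F (Quot.mk _ v) := by
      rw [hFmk, hFmk, hmk]; exact hv1
    have h4 : Quot.mk (BallEquiv G φ (m + 1)) x ≠ Quot.mk _ v :=
      fun h => hv2 ((hmk _ _ _).1 h)
    have := hL2 _ _ _ _ h1 h2 h3 h4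
    rw [hFmk, hFmk, hmk] at this
    exact this
  have U2 : ∀ x : V, BallEquiv G φ m s' x →
      BallEquiv G φ (m + 1) an x ∨ BallEquiv G φ (m + 1) bn x := by
    intro x hx
    by_contra hcon
    push_neg at hcon
    obtain ⟨h1, h2⟩ := hcon
    refine hL1 (Quot.mk _ an) (Quot.mk _ bn) (Quot.mk _ x) ?_ ?_ ?_ ?_ ?_
    · rw [hFmk, hFmk, hmk]
      exact (hequiv m).trans han ((hequiv m).symm hbn)
    · rw [hFmk, hFmk, hmk]
      exact (hequiv m).trans hbn hx
    · intro h; exact hanbn ((hmk _ _ _).1 h)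
    · intro h; exact h1 ((hmk _ _ _).1 h)
    · intro h; exact h2 ((hmk _ _ _).1 h)
  have U3 : ∀ x z : V, ¬ BallEquiv G φ m s' x → BallEquiv G φ m x z →
      BallEquiv G φ (m + 1) x z := by
    intro x z h1 h2
    by_contra h3
    exact h1 (U1 x ⟨z, h2, h3⟩)
  -- the ball equivalence between a and b
  have hab0 : BallEquiv G φ (m + 1) a b := (hequiv _).trans ha ((hequiv _).symm hb)
  have hcolab : φ a = φ b := (ballEquiv_color hab0).symm
  obtain ⟨f, hfa, hf, hfinj, hfsurj⟩ := ballEquiv_neighbor_balls hconn (k := m) hab0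
  -- finsets of neighbors in various classes
  set PA : V → Prop := fun x => BallEquiv G φ (m + 1) an x with hPA
  set PB : V → Prop := fun x => BallEquiv G φ (m + 1) bn x with hPB
  set PS : V → Prop := fun x => BallEquiv G φ m s' x with hPS
  set na := G.neighborFinset a with hna
  set nb := G.neighborFinset b with hnb
  rw [card_adj_filter_eq G a PA, card_adj_filter_eq G b PA, ← hna, ← hnb] at hc
  have hSAB : ∀ w : V, PS w ↔ (PA w ∨ PB w) := by
    intro w
    constructor
    · intro h; exact U2 w h
    · rintro (h | h)
      · exact (hequiv m).trans ((hequiv m).symm han) (ballEquiv_mono (by omega) h)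
      · exact (hequiv m).trans ((hequiv m).symm hbn) (ballEquiv_mono (by omega) h)
  have hdisjAB : ∀ s : Finset V, Disjoint (s.filter PA) (s.filter PB) := by
    intro s
    rw [Finset.disjoint_left]
    intro w hwA hwB
    rw [Finset.mem_filter] at hwA hwB
    exact hanbn ((hequiv _).trans hwA.2 ((hequiv _).symm hwB.2))
  have hunionS : ∀ s : Finset V, s.filter PS = s.filter PA ∪ s.filter PB := by
    intro s
    ext w
    simp only [Finset.mem_union, Finset.mem_filter]
    constructor
    · rintro ⟨hw, h⟩
      rcases (hSAB w).1 h with h | h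
      exacts [Or.inl ⟨hw, h⟩, Or.inr ⟨hw, h⟩]
    · rintro (⟨hw, h⟩ | ⟨hw, h⟩)
      exacts [⟨hw, (hSAB w).2 (Or.inl h)⟩, ⟨hw, (hSAB w).2 (Or.inr h)⟩]
  have hcardS : ∀ s : Finset V, (s.filter PS).card = (s.filter PA).card + (s.filter PB).card :=
    fun s => by rw [hunionS s, Finset.card_union_of_disjoint (hdisjAB s)]
  -- f preserves PS on neighbors
  have hPSpres : ∀ w : V, G.Adj a w → (PS w ↔ PS (f w)) := by
    intro w hw
    constructor
    · intro h; exact (hequiv m).trans h (hf w hw).2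
    · intro h; exact (hequiv m).trans h ((hequiv m).symm (hf w hw).2)
  have hmem_na : ∀ w : V, w ∈ na ↔ G.Adj a w := fun w => by
    rw [hna, SimpleGraph.mem_neighborFinset]
  have hmem_nb : ∀ w : V, w ∈ nb ↔ G.Adj b w := fun w => by
    rw [hnb, SimpleGraph.mem_neighborFinset]
  have himgS : (na.filter PS).image f = nb.filter PS := by
    ext r
    simp only [Finset.mem_image, Finset.mem_filter]
    constructor
    · rintro ⟨w, ⟨hw, hPSw⟩, rfl⟩
      have hw' := (hmem_na w).1 hw
      exact ⟨(hmem_nb _).2 (hf w hw').1, (hPSpres w hw').1 hPSw⟩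
    · rintro ⟨hr, hPSr⟩
      obtain ⟨w, hw, rfl⟩ := hfsurj r ((hmem_nb r).1 hr)
      exact ⟨w, ⟨(hmem_na w).2 hw, (hPSpres w hw).2 hPSr⟩, rfl⟩
  have hcardtS : (na.filter PS).card = (nb.filter PS).card := by
    rw [← himgS]
    rw [Finset.card_image_of_injOn]
    intro w hw w' hw' he
    rw [Finset.coe_filter, Set.mem_setOf_eq] at hw hw'
    exact hfinj w w' ((hmem_na w).1 hw.1) ((hmem_na w').1 hw'.1) he
  have hcardB : (na.filter PB).card = (nb.filter PB).card := by
    have := hcardS na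
    have := hcardS nb
    omega
  -- build the matching σ
  set tA := na.filter PA with htA
  set tB := na.filter PB with htB
  set uA := nb.filter PA with huA
  set uB := nb.filter PB with huB
  have eA : {x // x ∈ tA} ≃ {x // x ∈ uA} := Finset.equivOfCardEq hc
  have eB : {x // x ∈ tB} ≃ {x // x ∈ uB} := Finset.equivOfCardEq hcardB
  set σ : V → V := fun w =>
    if h : w ∈ tA then (eA ⟨w, h⟩ : {x // x ∈ uA}).1
    else if h' : w ∈ tB then (eB ⟨w, h'⟩ : {x // x ∈ uB}).1
    else f w with hσdef
  have hσA : ∀ w (h : w ∈ tA), σ w = (eA ⟨w, h⟩ : {x // x ∈ uA}).1 := by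
    intro w h
    rw [hσdef]
    simp only [h, dif_pos]
  have hσB : ∀ w (h : w ∈ tB), σ w = (eB ⟨w, h⟩ : {x // x ∈ uB}).1 := by
    intro w h
    have hnA : w ∉ tA := by
      intro h'
      exact (Finset.disjoint_left.mp (hdisjAB na)) h' h
    rw [hσdef]
    simp only [hnA, h, dif_neg, dif_pos, not_false_iff]
  have hσO : ∀ w, w ∉ tA → w ∉ tB → σ w = f w := by
    intro w h1 h2
    rw [hσdef]
    simp only [h1, h2, dif_neg, not_false_iff]
  -- classification of σ w
  have hclass : ∀ w, G.Adj a w →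
      (w ∈ tA ∧ σ w ∈ uA) ∨ (w ∈ tB ∧ σ w ∈ uB) ∨
      (w ∉ tA ∧ w ∉ tB ∧ σ w = f w ∧ σ w ∈ nb ∧ ¬ PS (σ w)) := by
    intro w hw
    by_cases h1 : w ∈ tA
    · exact Or.inl ⟨h1, hσA w h1 ▸ (eA ⟨w, h1⟩).2⟩
    · by_cases h2 : w ∈ tB
      · exact Or.inr (Or.inl ⟨h2, hσB w h2 ▸ (eB ⟨w, h2⟩).2⟩)
      · have hPSw : ¬ PS w := by
          intro h
          rcases (hSAB w).1 h with h' | h'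
          · exact h1 (Finset.mem_filter.mpr ⟨(hmem_na w).2 hw, h'⟩)
          · exact h2 (Finset.mem_filter.mpr ⟨(hmem_na w).2 hw, h'⟩)
        refine Or.inr (Or.inr ⟨h1, h2, hσO w h1 h2, ?_, ?_⟩)
        · rw [hσO w h1 h2]
          exact (hmem_nb _).2 (hf w hw).1
        · rw [hσO w h1 h2]
          intro h
          exact hPSw ((hPSpres w hw).2 h)
  -- σ gives ball-equivalent neighbors
  have hσmain : ∀ w, G.Adj a w → G.Adj b (σ w) ∧ BallEquiv G φ (m + 1) w (σ w) := by
    intro w hw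
    rcases hclass w hw with ⟨h1, h2⟩ | ⟨h1, h2⟩ | ⟨h1, h2, h3, h4, _⟩
    · rw [Finset.mem_filter] at h1 h2
      exact ⟨(hmem_nb _).1 h2.1,
        (hequiv _).trans ((hequiv _).symm h1.2) h2.2⟩
    · rw [Finset.mem_filter] at h1 h2
      exact ⟨(hmem_nb _).1 h2.1,
        (hequiv _).trans ((hequiv _).symm h1.2) h2.2⟩
    · have hPSw : ¬ PS w := by
        intro h
        rcases (hSAB w).1 h with h' | h'
        · exact h1 (Finset.mem_filter.mpr ⟨(hmem_na w).2 hw, h'⟩)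
        · exact h2 (Finset.mem_filter.mpr ⟨(hmem_na w).2 hw, h'⟩)
      rw [h3]
      exact ⟨(hf w hw).1, U3 w (f w) hPSw (hf w hw).2⟩
  -- σ is injective on neighbors of a
  have hsubuS : ∀ r, r ∈ uA ∨ r ∈ uB → PS r := by
    rintro r (h | h) <;> rw [Finset.mem_filter] at h
    · exact (hSAB r).2 (Or.inl h.2)
    · exact (hSAB r).2 (Or.inr h.2)
  have hσinj : ∀ w w', G.Adj a w → G.Adj a w' → σ w = σ w' → w = w' := by
    intro w w' hw hw' he
    rcases hclass w hw with ⟨h1, h2⟩ | ⟨h1, h2⟩ | ⟨h1, h2, h3, h4, h5⟩ <;>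
      rcases hclass w' hw' with ⟨g1, g2⟩ | ⟨g1, g2⟩ | ⟨g1, g2, g3, g4, g5⟩
    · -- both in tA
      have : (⟨w, h1⟩ : {x // x ∈ tA}) = ⟨w', g1⟩ := by
        apply eA.injective
        apply Subtype.ext
        rw [← hσA w h1, ← hσA w' g1, he]
      exact congrArg Subtype.val this
    · exact absurd (he ▸ h2) (fun h => (Finset.disjoint_left.mp (hdisjAB nb)) h g2)
    · exact absurd (hsubuS _ (Or.inl (he ▸ h2))) (he ▸ g5)
    · exact absurd (he ▸ h2) (fun h => (Finset.disjoint_left.mp (hdisjAB nb)) g2 h)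
    · have : (⟨w, h1⟩ : {x // x ∈ tB}) = ⟨w', g1⟩ := by
        apply eB.injective
        apply Subtype.ext
        rw [← hσB w h1, ← hσB w' g1, he]
      exact congrArg Subtype.val this
    · exact absurd (hsubuS _ (Or.inr (he ▸ h2))) (he ▸ g5)
    · exact absurd (hsubuS _ (Or.inl (he ▸ g2))) (he ▸ h5)
    · exact absurd (hsubuS _ (Or.inr (he ▸ g2))) (he ▸ h5)
    · rw [h3, g3] at he
      exact hfinj w w' hw hw' he
  -- σ is surjective onto the neighbors of b
  have hσsurj : ∀ r, G.Adj b r → ∃ w, G.Adj a w ∧ σ w = r := by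
    intro r hr
    by_cases h1 : r ∈ uA
    · refine ⟨(eA.symm ⟨r, h1⟩).1, ?_, ?_⟩
      · have hmem := Finset.mem_filter.mp (eA.symm ⟨r, h1⟩).2
        exact (hmem_na _).1 hmem.1
      · rw [hσA _ (eA.symm ⟨r, h1⟩).2]
        have heta : (⟨(eA.symm ⟨r, h1⟩).1, (eA.symm ⟨r, h1⟩).2⟩ : {x // x ∈ tA}) =
            eA.symm ⟨r, h1⟩ := rfl
        rw [heta, eA.apply_symm_apply]
    · by_cases h2 : r ∈ uB
      · refine ⟨(eB.symm ⟨r, h2⟩).1, ?_, ?_⟩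
        · have hmem := Finset.mem_filter.mp (eB.symm ⟨r, h2⟩).2
          exact (hmem_na _).1 hmem.1
        · rw [hσB _ (eB.symm ⟨r, h2⟩).2]
          have heta : (⟨(eB.symm ⟨r, h2⟩).1, (eB.symm ⟨r, h2⟩).2⟩ : {x // x ∈ tB}) =
              eB.symm ⟨r, h2⟩ := rfl
          rw [heta, eB.apply_symm_apply]
      · obtain ⟨w, hw, rfl⟩ := hfsurj r hr
        have hPSr : ¬ PS (f w) := by
          intro h
          rcases (hSAB (f w)).1 h with h' | h'
          · exact h1 (Finset.mem_filter.mpr ⟨(hmem_nb _).2 (hf w hw).1, h'⟩)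
          · exact h2 (Finset.mem_filter.mpr ⟨(hmem_nb _).2 (hf w hw).1, h'⟩)
        have hPSw : ¬ PS w := fun h => hPSr ((hPSpres w hw).1 h)
        have hwA : w ∉ tA := by
          intro h
          rw [htA, Finset.mem_filter] at h
          exact hPSw ((hSAB w).2 (Or.inl h.2))
        have hwB : w ∉ tB := by
          intro h
          rw [htB, Finset.mem_filter] at h
          exact hPSw ((hSAB w).2 (Or.inr h.2))
        exact ⟨w, hw, hσO w hwA hwB⟩
  -- glue and contradict
  exact hab (ballEquiv_of_neighbor_matching htree hcolab σ hσmain hσinj hσsurj)
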